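/- Let λ ∈ ℝ, λ ≠ 0, let u : ℝ² → ℝ be a C⁴ function of (x,t), and set m = u − u_{xx}. Define the 1-forms ω_1 = (λ/2 + 1/(2λ) − m) dx + (um + (λ/2)u − u/(2λ) − 1/2 − λ²/2) dt, ω_2 = −u_x dt, ω_3 = (m + 1/(2λ) − λ/2) dx + (λ²/2 − 1/2 − u/(2λ) − (λ/2)u − um) dt. Then at every point of ℝ²: dω_1 − ω_3∧ω_2 = (u_t − u_{txx} + 3uu_x − 2u_xu_{xx} − uu_{xxx}) dx∧dt, dω_2 − ω_1∧ω_3 = 0, and dω_3 − ω_1∧ω_2 = −(u_t − u_{txx} + 3uu_x − 2u_xu_{xx} − uu_{xxx}) dx∧dt. Consequently, the structure equations dω_1 = ω_3∧ω_2, dω_2 = ω_1∧ω_3, dω_3 = ω_1∧ω_2 hold at every point if and only if u satisfies the Camassa–Holm equation u_t − u_{txx} + 3uu_x = 2u_xu_{xx} + uu_{xxx} at every point. -/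

import Mathlib

private lemma hasDerivAt_slice_x {f : ℝ × ℝ → ℝ} (hf : Differentiable ℝ f) (p : ℝ × ℝ) :
    HasDerivAt (fun x => f (x, p.2)) (fderiv ℝ f p ((1 : ℝ), (0 : ℝ))) p.1 := by
  have hg : HasDerivAt (fun x : ℝ => (x, p.2)) ((1 : ℝ), (0 : ℝ)) p.1 :=
    HasDerivAt.prodMk (hasDerivAt_id p.1) (hasDerivAt_const p.1 p.2)
  have h : HasFDerivAt f (fderiv ℝ f p) ((fun x : ℝ => (x, p.2)) p.1) := by
    simpa using (hf p).hasFDerivAt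
  simpa [Function.comp_def] using h.comp_hasDerivAt p.1 hg

private lemma hasDerivAt_slice_t {f : ℝ × ℝ → ℝ} (hf : Differentiable ℝ f) (p : ℝ × ℝ) :
    HasDerivAt (fun t => f (p.1, t)) (fderiv ℝ f p ((0 : ℝ), (1 : ℝ))) p.2 := by
  have hg : HasDerivAt (fun t : ℝ => (p.1, t)) ((0 : ℝ), (1 : ℝ)) p.2 :=
    HasDerivAt.prodMk (hasDerivAt_const p.2 p.1) (hasDerivAt_id p.2)
  have h : HasFDerivAt f (fderiv ℝ f p) ((fun t : ℝ => (p.1, t)) p.2) := by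
    simpa using (hf p).hasFDerivAt
  simpa [Function.comp_def] using h.comp_hasDerivAt p.2 hg

private lemma contDiff_fderiv_apply {m n : WithTop ℕ∞} {f : ℝ × ℝ → ℝ} (hf : ContDiff ℝ n f)
    (h : m + 1 ≤ n) (v : ℝ × ℝ) : ContDiff ℝ m (fun p => fderiv ℝ f p v) :=
  (hf.fderiv_right h).clm_apply contDiff_const



/-- Let `λ ∈ ℝ`, `λ ≠ 0`, `u : ℝ² → ℝ` a `C⁴` function of `(x,t)`, and `m = u − u_xx`.
Define the 1-forms
`ω_1 = (λ/2 + 1/(2λ) − m) dx + (um + (λ/2)u − u/(2λ) − 1/2 − λ²/2) dt`,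
`ω_2 = −u_x dt`,
`ω_3 = (m + 1/(2λ) − λ/2) dx + (λ²/2 − 1/2 − u/(2λ) − (λ/2)u − um) dt`.
With `d(f dx + g dt) = (∂_x g − ∂_t f) dx∧dt` and
`(f dx + g dt)∧(f' dx + g' dt) = (f g' − g f') dx∧dt`, at every point of `ℝ²`:
`dω_1 − ω_3∧ω_2 = (u_t − u_{txx} + 3uu_x − 2u_xu_{xx} − uu_{xxx}) dx∧dt`,
`dω_2 − ω_1∧ω_3 = 0`,
`dω_3 − ω_1∧ω_2 = −(u_t − u_{txx} + 3uu_x − 2u_xu_{xx} − uu_{xxx}) dx∧dt`.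
Consequently the structure equations hold at every point iff `u` satisfies the
Camassa–Holm equation `u_t − u_{txx} + 3uu_x = 2u_xu_{xx} + uu_{xxx}` everywhere. -/
theorem stmt_6 (lam : ℝ) (hlam : lam ≠ 0) (u : ℝ × ℝ → ℝ) (hu : ContDiff ℝ 4 u)
    (ux uxx uxxx ut utxx mm f11 f12 f31 f32 : ℝ × ℝ → ℝ)
    (hux : ∀ p : ℝ × ℝ, ux p = deriv (fun x => u (x, p.2)) p.1)
    (huxx : ∀ p : ℝ × ℝ, uxx p = deriv (fun x => ux (x, p.2)) p.1)
    (huxxx : ∀ p : ℝ × ℝ, uxxx p = deriv (fun x => uxx (x, p.2)) p.1)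
    (hut : ∀ p : ℝ × ℝ, ut p = deriv (fun t => u (p.1, t)) p.2)
    (hutxx : ∀ p : ℝ × ℝ, utxx p = deriv (fun t => uxx (p.1, t)) p.2)
    (hmm : ∀ p : ℝ × ℝ, mm p = u p - uxx p)
    (hf11 : ∀ p : ℝ × ℝ, f11 p = lam / 2 + 1 / (2 * lam) - mm p)
    (hf12 : ∀ p : ℝ × ℝ, f12 p
      = u p * mm p + (lam / 2) * u p - u p / (2 * lam) - 1 / 2 - lam ^ 2 / 2)
    (hf31 : ∀ p : ℝ × ℝ, f31 p = mm p + 1 / (2 * lam) - lam / 2)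
    (hf32 : ∀ p : ℝ × ℝ, f32 p
      = lam ^ 2 / 2 - 1 / 2 - u p / (2 * lam) - (lam / 2) * u p - u p * mm p) :
    (∀ p : ℝ × ℝ,
        -- dω₁ − ω₃∧ω₂ = (CH expression) dx∧dt
        (deriv (fun x => f12 (x, p.2)) p.1 - deriv (fun t => f11 (p.1, t)) p.2)
            - (f31 p * (-ux p) - f32 p * 0)
          = ut p - utxx p + 3 * u p * ux p - 2 * ux p * uxx p - u p * uxxx p
      ∧ -- dω₂ − ω₁∧ω₃ = 0
        (deriv (fun x => -ux (x, p.2)) p.1 - deriv (fun _t : ℝ => (0 : ℝ)) p.2)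
            - (f11 p * f32 p - f12 p * f31 p) = 0
      ∧ -- dω₃ − ω₁∧ω₂ = −(CH expression) dx∧dt
        (deriv (fun x => f32 (x, p.2)) p.1 - deriv (fun t => f31 (p.1, t)) p.2)
            - (f11 p * (-ux p) - f12 p * 0)
          = -(ut p - utxx p + 3 * u p * ux p - 2 * ux p * uxx p - u p * uxxx p))
    ∧ ((∀ p : ℝ × ℝ,
          (deriv (fun x => f12 (x, p.2)) p.1 - deriv (fun t => f11 (p.1, t)) p.2
              = f31 p * (-ux p) - f32 p * 0)
          ∧ (deriv (fun x => -ux (x, p.2)) p.1 - deriv (fun _t : ℝ => (0 : ℝ)) p.2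
              = f11 p * f32 p - f12 p * f31 p)
          ∧ (deriv (fun x => f32 (x, p.2)) p.1 - deriv (fun t => f31 (p.1, t)) p.2
              = f11 p * (-ux p) - f12 p * 0))
        ↔ (∀ p : ℝ × ℝ,
            ut p - utxx p + 3 * u p * ux p
              = 2 * ux p * uxx p + u p * uxxx p)) := by
  have hud : Differentiable ℝ u := hu.differentiable (by norm_num)
  set U1 : ℝ × ℝ → ℝ := fun p => fderiv ℝ u p ((1 : ℝ), (0 : ℝ)) with hU1def
  have hU1 : ContDiff ℝ 3 U1 := contDiff_fderiv_apply hu (by norm_num) _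
  have hU1d : Differentiable ℝ U1 := hU1.differentiable (by norm_num)
  have hux' : ux = U1 := funext fun p => (hux p).trans (hasDerivAt_slice_x hud p).deriv
  set U2 : ℝ × ℝ → ℝ := fun p => fderiv ℝ U1 p ((1 : ℝ), (0 : ℝ)) with hU2def
  have hU2 : ContDiff ℝ 2 U2 := contDiff_fderiv_apply hU1 (by norm_num) _
  have hU2d : Differentiable ℝ U2 := hU2.differentiable (by norm_num)
  have huxx' : uxx = U2 := funext fun p => by
    rw [huxx p, hux']; exact (hasDerivAt_slice_x hU1d p).deriv
  set U3 : ℝ × ℝ → ℝ := fun p => fderiv ℝ U2 p ((1 : ℝ), (0 : ℝ)) with hU3def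
  have huxxx' : uxxx = U3 := funext fun p => by
    rw [huxxx p, huxx']; exact (hasDerivAt_slice_x hU2d p).deriv
  have hDu_x : ∀ p : ℝ × ℝ, HasDerivAt (fun x => u (x, p.2)) (ux p) p.1 := fun p => by
    rw [hux']; exact hasDerivAt_slice_x hud p
  have hDux_x : ∀ p : ℝ × ℝ, HasDerivAt (fun x => ux (x, p.2)) (uxx p) p.1 := fun p => by
    rw [hux', huxx']; exact hasDerivAt_slice_x hU1d p
  have hDuxx_x : ∀ p : ℝ × ℝ, HasDerivAt (fun x => uxx (x, p.2)) (uxxx p) p.1 := fun p => by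
    rw [huxx', huxxx']; exact hasDerivAt_slice_x hU2d p
  have hDu_t : ∀ p : ℝ × ℝ, HasDerivAt (fun t => u (p.1, t)) (ut p) p.2 := fun p => by
    rw [hut p, (hasDerivAt_slice_t hud p).deriv]; exact hasDerivAt_slice_t hud p
  have hDuxx_t : ∀ p : ℝ × ℝ, HasDerivAt (fun t => uxx (p.1, t)) (utxx p) p.2 := fun p => by
    rw [hutxx p, huxx', (hasDerivAt_slice_t hU2d p).deriv]; exact hasDerivAt_slice_t hU2d p
  -- derivative computations
  have d12 : ∀ p : ℝ × ℝ, deriv (fun x => f12 (x, p.2)) p.1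
      = ux p * (u p - uxx p) + u p * (ux p - uxxx p) + lam / 2 * ux p - ux p / (2 * lam)
        - 0 - 0 := by
    intro p
    have e : (fun x => f12 (x, p.2)) = fun x =>
        u (x, p.2) * (u (x, p.2) - uxx (x, p.2)) + lam / 2 * u (x, p.2)
          - u (x, p.2) / (2 * lam) - 1 / 2 - lam ^ 2 / 2 :=
      funext fun x => by rw [hf12, hmm]
    have h : HasDerivAt (fun x => f12 (x, p.2))
        (ux p * (u p - uxx p) + u p * (ux p - uxxx p) + lam / 2 * ux p - ux p / (2 * lam)
          - 0 - 0) p.1 := by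
      rw [e]
      exact (((((hDu_x p).mul ((hDu_x p).sub (hDuxx_x p))).add
        (HasDerivAt.const_mul (lam / 2) (hDu_x p))).sub
        ((hDu_x p).div_const (2 * lam))).sub (hasDerivAt_const _ _)).sub (hasDerivAt_const _ _)
    exact h.deriv
  have d11t : ∀ p : ℝ × ℝ, deriv (fun t => f11 (p.1, t)) p.2 = 0 - (ut p - utxx p) := by
    intro p
    have e : (fun t => f11 (p.1, t)) = fun t =>
        lam / 2 + 1 / (2 * lam) - (u (p.1, t) - uxx (p.1, t)) :=
      funext fun t => by rw [hf11, hmm]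
    have h : HasDerivAt (fun t => f11 (p.1, t)) (0 - (ut p - utxx p)) p.2 := by
      rw [e]; exact (hasDerivAt_const _ _).sub ((hDu_t p).sub (hDuxx_t p))
    exact h.deriv
  have dux : ∀ p : ℝ × ℝ, deriv (fun x => -ux (x, p.2)) p.1 = -uxx p :=
    fun p => ((hDux_x p).neg).deriv
  have d32 : ∀ p : ℝ × ℝ, deriv (fun x => f32 (x, p.2)) p.1
      = 0 - 0 - ux p / (2 * lam) - lam / 2 * ux p
        - (ux p * (u p - uxx p) + u p * (ux p - uxxx p)) := by
    intro p
    have e : (fun x => f32 (x, p.2)) = fun x =>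
        lam ^ 2 / 2 - 1 / 2 - u (x, p.2) / (2 * lam) - lam / 2 * u (x, p.2)
          - u (x, p.2) * (u (x, p.2) - uxx (x, p.2)) :=
      funext fun x => by rw [hf32, hmm]
    have h : HasDerivAt (fun x => f32 (x, p.2))
        (0 - 0 - ux p / (2 * lam) - lam / 2 * ux p
          - (ux p * (u p - uxx p) + u p * (ux p - uxxx p))) p.1 := by
      rw [e]
      exact (((((hasDerivAt_const _ _).sub (hasDerivAt_const _ _)).sub
        ((hDu_x p).div_const (2 * lam))).sub
        (HasDerivAt.const_mul (lam / 2) (hDu_x p))).sub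
        ((hDu_x p).mul ((hDu_x p).sub (hDuxx_x p))))
    exact h.deriv
  have d31t : ∀ p : ℝ × ℝ, deriv (fun t => f31 (p.1, t)) p.2 = ut p - utxx p + 0 - 0 := by
    intro p
    have e : (fun t => f31 (p.1, t)) = fun t =>
        u (p.1, t) - uxx (p.1, t) + 1 / (2 * lam) - lam / 2 :=
      funext fun t => by rw [hf31, hmm]
    have h : HasDerivAt (fun t => f31 (p.1, t)) (ut p - utxx p + 0 - 0) p.2 := by
      rw [e]
      exact (((hDu_t p).sub (hDuxx_t p)).add (hasDerivAt_const _ _)).sub (hasDerivAt_const _ _)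
    exact h.deriv
  have dzero : ∀ p : ℝ × ℝ, deriv (fun _t : ℝ => (0 : ℝ)) p.2 = 0 := fun p => deriv_const _ _
  have key : ∀ p : ℝ × ℝ,
      (deriv (fun x => f12 (x, p.2)) p.1 - deriv (fun t => f11 (p.1, t)) p.2)
          - (f31 p * (-ux p) - f32 p * 0)
        = ut p - utxx p + 3 * u p * ux p - 2 * ux p * uxx p - u p * uxxx p
      ∧ (deriv (fun x => -ux (x, p.2)) p.1 - deriv (fun _t : ℝ => (0 : ℝ)) p.2)
          - (f11 p * f32 p - f12 p * f31 p) = 0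
      ∧ (deriv (fun x => f32 (x, p.2)) p.1 - deriv (fun t => f31 (p.1, t)) p.2)
          - (f11 p * (-ux p) - f12 p * 0)
        = -(ut p - utxx p + 3 * u p * ux p - 2 * ux p * uxx p - u p * uxxx p) := by
    intro p
    refine ⟨?_, ?_, ?_⟩
    · rw [d12 p, d11t p, hf31 p, hf32 p, hmm p]
      field_simp
      ring
    · rw [dux p, dzero p, hf11 p, hf12 p, hf31 p, hf32 p, hmm p]
      field_simp
      ring
    · rw [d32 p, d31t p, hf11 p, hf12 p, hmm p]
      field_simp
      ring
  refine ⟨key, ⟨fun hst p => ?_, fun hCH p => ?_⟩⟩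
  · obtain ⟨k1, k2, k3⟩ := key p
    obtain ⟨s1, s2, s3⟩ := hst p
    nlinarith [k1, s1]
  · obtain ⟨k1, k2, k3⟩ := key p
    have h := hCH p
    exact ⟨by linarith, by linarith, by linarith⟩
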